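/- arXiv:1107.5865 — 2 statements merged into one kernel-verified Lean document; each statement's English description precedes it below -/
import Mathlib

section
/- Let f, g : OnePoint ℝ → OnePoint (ℝ × ℝ) be the maps sending ∞ to ∞ and a real number x to (x, x) and to (0, x) respectively. Then f and g are continuous, and the map H : OnePoint ℝ × [0,1] → OnePoint (ℝ × ℝ) defined by H(x, t) = (t·x, x) for x ∈ ℝ and H(∞, t) = ∞ is continuous, so H is a homotopy from g to f. Moreover H is pointed and equivariant for negation: H(∞, t) = ∞ for all t ∈ [0,1], and H(−x, t) = −H(x, t) for all x ∈ OnePoint ℝ and t ∈ [0,1], where negation on OnePoint ℝ and on OnePoint (ℝ × ℝ) is the extension of v ↦ −v that fixes ∞. -/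
open OnePoint

/-- The diagonal inclusion `S^{1,1} → S^{2,2}`, `x ↦ (x, x)`, on one-point
compactifications. -/
noncomputable def diagMap : OnePoint ℝ → OnePoint (ℝ × ℝ) :=
  OnePoint.map fun x : ℝ => (x, x)

/-- The vertical-axis inclusion `S^{1,1} → S^{2,2}`, `x ↦ (0, x)`, on one-point
compactifications. -/
noncomputable def axisMap : OnePoint ℝ → OnePoint (ℝ × ℝ) :=
  OnePoint.map fun x : ℝ => ((0 : ℝ), x)

/-- The homotopy `H(x, t) = (t·x, x)`, `H(∞, t) = ∞`. -/
noncomputable def diagHomotopy : OnePoint ℝ × Set.Icc (0 : ℝ) 1 → OnePoint (ℝ × ℝ) :=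
  fun p => OnePoint.map (fun x : ℝ => ((p.2 : ℝ) * x, x)) p.1

/-- Negation on a one-point compactification, fixing `∞`. -/
noncomputable def onePointNeg {V : Type*} [Neg V] : OnePoint V → OnePoint V :=
  OnePoint.map fun v : V => -v

open Filter Topology
lemma aux_cont_of_isometry {f : ℝ → ℝ × ℝ} (hf : Continuous f) (hiso : Isometry f) :
    Continuous (OnePoint.map f) :=
  OnePoint.continuous_map hf (by
    rw [coclosedCompact_eq_cocompact, coclosedCompact_eq_cocompact]
    exact hiso.isClosedEmbedding.tendsto_cocompact)

lemma aux_homotopy_cont :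
    Continuous (fun p : OnePoint ℝ × Set.Icc (0 : ℝ) 1 =>
      OnePoint.map (fun x : ℝ => ((p.2 : ℝ) * x, x)) p.1) := by
  set H : OnePoint ℝ × Set.Icc (0 : ℝ) 1 → OnePoint (ℝ × ℝ) :=
    fun p => OnePoint.map (fun x : ℝ => ((p.2 : ℝ) * x, x)) p.1 with hH
  rw [continuous_iff_continuousAt]
  rintro ⟨x, t⟩
  induction x using OnePoint.rec with
  | infty =>
    rw [ContinuousAt]
    have hHinf : H (∞, t) = ∞ := rfl
    rw [hHinf, nhds_prod_eq]
    rw [OnePoint.hasBasis_nhds_infty.tendsto_right_iff]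
    rintro s ⟨hscl, hscp⟩
    obtain ⟨R, hR⟩ := hscp.isBounded.subset_closedBall 0
    have hmem : ((fun x : ℝ => (x : OnePoint ℝ)) '' (Metric.closedBall (0:ℝ) R)ᶜ ∪ {∞}) ×ˢ
        (Set.univ : Set (Set.Icc (0:ℝ) 1)) ∈ 𝓝 (∞ : OnePoint ℝ) ×ˢ 𝓝 t := by
      apply Filter.prod_mem_prod _ Filter.univ_mem
      exact OnePoint.hasBasis_nhds_infty.mem_of_mem ⟨Metric.isClosed_closedBall,
        isCompact_closedBall 0 R⟩
    filter_upwards [hmem]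
    rintro ⟨a, s'⟩ ⟨ha, -⟩
    rcases ha with ⟨y, hy, rfl⟩ | ha
    · left
      refine ⟨((s' : ℝ) * y, y), ?_, rfl⟩
      intro hmem'
      apply hy
      have := hR hmem'
      simp only [Metric.mem_closedBall, dist_zero_right] at this ⊢
      exact le_trans (by simpa using norm_snd_le ((s':ℝ)*y, y)) this
    · simp only [Set.mem_singleton_iff] at ha
      subst ha
      right; rfl
  | coe x =>
    rw [ContinuousAt, nhds_prod_eq, OnePoint.nhds_coe_eq, ← Filter.map_id (f := 𝓝 t),
      Filter.prod_map_map_eq, tendsto_map'_iff]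
    have : (H ∘ Prod.map (fun x : ℝ => (x : OnePoint ℝ)) id) =
        (fun p : ℝ × Set.Icc (0:ℝ) 1 => ((((p.2 : ℝ) * p.1, p.1) : ℝ × ℝ) : OnePoint (ℝ × ℝ))) :=
      rfl
    refine this ▸ ?_
    have hc : Continuous (fun p : ℝ × Set.Icc (0:ℝ) 1 =>
        ((((p.2 : ℝ) * p.1, p.1) : ℝ × ℝ) : OnePoint (ℝ × ℝ))) := by
      exact OnePoint.continuous_coe.comp (by continuity)
    rw [← nhds_prod_eq]
    exact hc.continuousAt

/-- The maps `f(x) = (x,x)` and `g(x) = (0,x)` from `S^{1,1}` to `S^{2,2}` are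
continuous, and `H(x,t) = (t·x, x)` is a continuous homotopy from `g` to `f`
which is pointed (`H(∞,t) = ∞`) and equivariant for negation
(`H(-x,t) = -H(x,t)`). -/
theorem diag_axis_equivariant_pointed_homotopy :
    Continuous diagMap ∧ Continuous axisMap ∧ Continuous diagHomotopy ∧
    (∀ t : Set.Icc (0 : ℝ) 1, diagHomotopy (∞, t) = ∞) ∧
    (∀ x : OnePoint ℝ, diagHomotopy (x, ⟨0, by norm_num⟩) = axisMap x) ∧
    (∀ x : OnePoint ℝ, diagHomotopy (x, ⟨1, by norm_num⟩) = diagMap x) ∧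
    (∀ (x : OnePoint ℝ) (t : Set.Icc (0 : ℝ) 1),
      diagHomotopy (onePointNeg x, t) = onePointNeg (diagHomotopy (x, t))) := by
  
  refine ⟨?_, ?_, ?_, fun t => rfl, ?_, ?_, ?_⟩
  · exact aux_cont_of_isometry (by continuity)
      (Isometry.of_dist_eq fun a b => by simp [Prod.dist_eq])
  · exact aux_cont_of_isometry (by continuity)
      (Isometry.of_dist_eq fun a b => by
        simp [Prod.dist_eq, max_eq_right dist_nonneg])
  · exact aux_homotopy_cont
  · intro x
    induction x using OnePoint.rec with
    | infty => rfl
    | coe x => simp [diagHomotopy, axisMap]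
  · intro x
    induction x using OnePoint.rec with
    | infty => rfl
    | coe x => simp [diagHomotopy, diagMap]
  · intro x t
    induction x using OnePoint.rec with
    | infty => rfl
    | coe x => simp [diagHomotopy, onePointNeg, mul_neg, Prod.neg_mk]
end

section
/- Regard ℍ = Quaternion ℝ as a four-dimensional real inner product space, let G = {f : ℍ ≃ₗᵢ[ℝ] ℍ | det(f) = 1} be the group of real-linear isometry equivalences of ℍ of determinant 1 (≅ SO(4)), and let K = {f ∈ G | f(1) = 1} (≅ SO(3), acting on the purely imaginary quaternions). Then the map h : G → S(ℍ) × K given by h(f) = (f(1), v ↦ (f(1))⁻¹ · f(v)) is a well-defined homeomorphism onto the product of the unit sphere of ℍ with K: f(1) is a unit quaternion, the map v ↦ (f(1))⁻¹ · f(v) is a linear isometry of determinant 1 fixing 1, and the inverse of h is the continuous map (u, g) ↦ (v ↦ u · g(v)). Moreover h is equivariant: letting c be the linear isometry v ↦ i · v · i⁻¹ of ℍ (which negates the j- and k-coordinates), for every f ∈ G one has h(c ∘ f ∘ c⁻¹) = (c(f(1)), c ∘ g ∘ c⁻¹), where g(v) = (f(1))⁻¹ · f(v). -/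
open Quaternion

/-- Topologize the isometry group of `ℍ` by pointwise convergence (equivalently,
on this finite-dimensional space, the norm topology). -/
noncomputable instance : TopologicalSpace (Quaternion ℝ ≃ₗᵢ[ℝ] Quaternion ℝ) :=
  TopologicalSpace.induced
    (fun f => (f : Quaternion ℝ → Quaternion ℝ)) Pi.topologicalSpace

/-- The group `G ≅ SO(4)` of real-linear isometry equivalences of `ℍ` of
determinant `1`. -/
def G4 : Type :=
  {f : Quaternion ℝ ≃ₗᵢ[ℝ] Quaternion ℝ //
    LinearMap.det ((f.toLinearEquiv : Quaternion ℝ ≃ₗ[ℝ] Quaternion ℝ) :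
      Quaternion ℝ →ₗ[ℝ] Quaternion ℝ) = 1}

noncomputable instance : TopologicalSpace G4 := instTopologicalSpaceSubtype

/-- The subgroup `K ≅ SO(3)` of elements of `G` fixing `1 ∈ ℍ`. -/
def K4 : Type := {f : G4 // f.1 1 = 1}

noncomputable instance : TopologicalSpace K4 := instTopologicalSpaceSubtype

/-- The quaternion `i`. -/
def quatI : Quaternion ℝ := ⟨0, 1, 0, 0⟩

namespace SO4Aux

lemma quatI_ne_zero : quatI ≠ 0 := fun h => by
  have := congrArg QuaternionAlgebra.imI h
  simp [quatI] at this

lemma det_mulLeft (q : Quaternion ℝ) :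
    LinearMap.det (LinearMap.mulLeft ℝ q) = (normSq q)^2 := by
  set b : Module.Basis (Fin 4) ℝ (Quaternion ℝ) :=
    QuaternionAlgebra.basisOneIJK (-1 : ℝ) (0 : ℝ) (-1 : ℝ) with hb
  have h := LinearMap.det_toMatrix b (LinearMap.mulLeft ℝ q)
  have hm : LinearMap.toMatrix b b (LinearMap.mulLeft ℝ q) =
      !![q.re, -q.imI, -q.imJ, -q.imK;
         q.imI, q.re, -q.imK, q.imJ;
         q.imJ, q.imK, q.re, -q.imI;
         q.imK, -q.imJ, q.imI, q.re] := by
    have hr : ∀ x : Quaternion ℝ, b.repr x = ![x.re, x.imI, x.imJ, x.imK] := fun x => rfl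
    have hv : ∀ j : Fin 4, b j = (Quaternion.equivTuple ℝ).symm (Pi.single j 1) := fun j =>
      b.repr.injective (by
        rw [Module.Basis.repr_self]; ext k; rw [hr]
        fin_cases j <;> fin_cases k <;> simp [Finsupp.single_apply, Pi.single_apply])
    ext i j
    rw [LinearMap.toMatrix_apply, hv, LinearMap.mulLeft_apply, hr]
    simp only [Quaternion.re_mul, Quaternion.imI_mul, Quaternion.imJ_mul, Quaternion.imK_mul]
    fin_cases i <;> fin_cases j <;> simp [Pi.single_apply]
  refine Eq.trans h.symm ?_
  rw [hm, Quaternion.normSq_def']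
  simp [Matrix.det_succ_row_zero, Fin.sum_univ_succ, Fin.succAbove, Fin.castSucc,
    Fin.castAdd, Fin.castLE]
  ring

lemma det_mulLeft_one {u : Quaternion ℝ} (hu : ‖u‖ = 1) :
    LinearMap.det (LinearMap.mulLeft ℝ u) = 1 := by
  rw [det_mulLeft, Quaternion.normSq_eq_norm_mul_self, hu]; norm_num

lemma ne_zero_of_norm_one {u : Quaternion ℝ} (hu : ‖u‖ = 1) : u ≠ 0 := by
  intro h; rw [h, norm_zero] at hu; norm_num at hu

/-- Left multiplication by a unit-norm quaternion as a linear isometry equivalence. -/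
noncomputable def mulLeftIso (u : Quaternion ℝ) (hu : ‖u‖ = 1) :
    Quaternion ℝ ≃ₗᵢ[ℝ] Quaternion ℝ where
  toLinearEquiv := LinearEquiv.ofLinear (LinearMap.mulLeft ℝ u) (LinearMap.mulLeft ℝ u⁻¹)
    (LinearMap.ext fun v => show u * (u⁻¹ * v) = v from
      mul_inv_cancel_left₀ (ne_zero_of_norm_one hu) v)
    (LinearMap.ext fun v => show u⁻¹ * (u * v) = v from
      inv_mul_cancel_left₀ (ne_zero_of_norm_one hu) v)
  norm_map' v := by
    show ‖u * v‖ = ‖v‖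
    rw [norm_mul, hu, one_mul]

@[simp] lemma mulLeftIso_apply (u : Quaternion ℝ) (hu : ‖u‖ = 1) (v : Quaternion ℝ) :
    mulLeftIso u hu v = u * v := rfl

@[simp] lemma mulLeftIso_symm_apply (u : Quaternion ℝ) (hu : ‖u‖ = 1) (v : Quaternion ℝ) :
    (mulLeftIso u hu).symm v = u⁻¹ * v := rfl

lemma norm_one_of_G4 (f : G4) : ‖f.1 1‖ = 1 := by
  rw [f.1.norm_map, norm_one]

lemma det_trans (f g : Quaternion ℝ ≃ₗᵢ[ℝ] Quaternion ℝ) :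
    LinearMap.det (((f.trans g).toLinearEquiv : Quaternion ℝ ≃ₗ[ℝ] Quaternion ℝ) :
        Quaternion ℝ →ₗ[ℝ] Quaternion ℝ) =
      LinearMap.det ((g.toLinearEquiv : Quaternion ℝ ≃ₗ[ℝ] Quaternion ℝ) :
          Quaternion ℝ →ₗ[ℝ] Quaternion ℝ) *
      LinearMap.det ((f.toLinearEquiv : Quaternion ℝ ≃ₗ[ℝ] Quaternion ℝ) :
          Quaternion ℝ →ₗ[ℝ] Quaternion ℝ) := by
  rw [← LinearMap.det_comp]
  rfl

lemma det_mulLeftIso {u : Quaternion ℝ} (hu : ‖u‖ = 1) :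
    LinearMap.det (((mulLeftIso u hu).toLinearEquiv : Quaternion ℝ ≃ₗ[ℝ] Quaternion ℝ) :
      Quaternion ℝ →ₗ[ℝ] Quaternion ℝ) = 1 := by
  have : (((mulLeftIso u hu).toLinearEquiv : Quaternion ℝ ≃ₗ[ℝ] Quaternion ℝ) :
      Quaternion ℝ →ₗ[ℝ] Quaternion ℝ) = LinearMap.mulLeft ℝ u := rfl
  rw [this, det_mulLeft_one hu]

lemma det_mulLeftIso_symm {u : Quaternion ℝ} (hu : ‖u‖ = 1) :
    LinearMap.det ((((mulLeftIso u hu).symm).toLinearEquiv : Quaternion ℝ ≃ₗ[ℝ] Quaternion ℝ) :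
      Quaternion ℝ →ₗ[ℝ] Quaternion ℝ) = 1 := by
  have : ((((mulLeftIso u hu).symm).toLinearEquiv : Quaternion ℝ ≃ₗ[ℝ] Quaternion ℝ) :
      Quaternion ℝ →ₗ[ℝ] Quaternion ℝ) = LinearMap.mulLeft ℝ u⁻¹ := rfl
  rw [this, det_mulLeft_one]
  rw [norm_inv, hu]; norm_num

/-- Forward map. -/
noncomputable def fwd (f : G4) : Metric.sphere (0 : Quaternion ℝ) 1 × K4 :=
  (⟨f.1 1, by simpa [mem_sphere_zero_iff_norm] using norm_one_of_G4 f⟩,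
   ⟨⟨f.1.trans (mulLeftIso (f.1 1) (norm_one_of_G4 f)).symm, by
       rw [det_trans, det_mulLeftIso_symm, f.2, mul_one]⟩, by
     show (f.1 1)⁻¹ * f.1 1 = 1
     exact inv_mul_cancel₀ (ne_zero_of_norm_one (norm_one_of_G4 f))⟩)

/-- Inverse map. -/
noncomputable def bwd (p : Metric.sphere (0 : Quaternion ℝ) 1 × K4) : G4 :=
  ⟨p.2.1.1.trans (mulLeftIso p.1 (by simpa [mem_sphere_zero_iff_norm] using p.1.2)), by
    rw [det_trans, det_mulLeftIso, p.2.1.2, mul_one]⟩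

lemma fwd_apply_snd (f : G4) (v : Quaternion ℝ) :
    ((fwd f).2).1.1 v = (f.1 1)⁻¹ * f.1 v := rfl

lemma bwd_apply (p : Metric.sphere (0 : Quaternion ℝ) 1 × K4) (v : Quaternion ℝ) :
    (bwd p).1 v = (p.1 : Quaternion ℝ) * p.2.1.1 v := rfl

lemma left_inv' : Function.LeftInverse bwd fwd := by
  intro f
  apply Subtype.ext
  apply LinearIsometryEquiv.ext
  intro v
  show (f.1 1) * ((f.1 1)⁻¹ * f.1 v) = f.1 v
  exact mul_inv_cancel_left₀ (ne_zero_of_norm_one (norm_one_of_G4 f)) _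

lemma right_inv' : Function.RightInverse bwd fwd := by
  intro p
  have hu : (p.1 : Quaternion ℝ) ≠ 0 :=
    ne_zero_of_norm_one (by simpa [mem_sphere_zero_iff_norm] using p.1.2)
  have h1 : (bwd p).1 1 = (p.1 : Quaternion ℝ) := by
    rw [bwd_apply, p.2.2, mul_one]
  refine Prod.ext ?_ ?_
  · exact Subtype.ext h1
  · apply Subtype.ext
    apply Subtype.ext
    apply LinearIsometryEquiv.ext
    intro v
    show ((bwd p).1 1)⁻¹ * (bwd p).1 v = p.2.1.1 v
    rw [h1, bwd_apply, inv_mul_cancel_left₀ hu]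

lemma continuous_eval (v : Quaternion ℝ) :
    Continuous fun f : Quaternion ℝ ≃ₗᵢ[ℝ] Quaternion ℝ => f v :=
  (continuous_apply v).comp continuous_induced_dom

lemma continuous_into_iso {X : Type*} [TopologicalSpace X]
    (g : X → (Quaternion ℝ ≃ₗᵢ[ℝ] Quaternion ℝ))
    (h : ∀ v, Continuous fun x => g x v) : Continuous g := by
  rw [continuous_induced_rng]
  exact continuous_pi h

lemma continuous_fwd : Continuous fwd := by
  have hev : ∀ v, Continuous fun f : G4 => f.1 v :=
    fun v => (continuous_eval v).comp continuous_subtype_val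
  have hne : ∀ f : G4, f.1 1 ≠ 0 := fun f => ne_zero_of_norm_one (norm_one_of_G4 f)
  refine Continuous.prodMk ?_ ?_
  · exact (hev 1).subtype_mk _
  · refine Continuous.subtype_mk (Continuous.subtype_mk ?_ _) _
    exact continuous_into_iso _ fun v => ((hev 1).inv₀ hne).mul (hev v)

lemma continuous_bwd : Continuous bwd := by
  have hev : ∀ v, Continuous fun p : Metric.sphere (0 : Quaternion ℝ) 1 × K4 => p.2.1.1 v :=
    fun v => (continuous_eval v).comp
      (continuous_subtype_val.comp ((@continuous_subtype_val G4 _ (fun f : G4 => f.1 1 = 1)).comp continuous_snd))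
  refine Continuous.subtype_mk ?_ _
  exact continuous_into_iso _ fun v =>
    (continuous_subtype_val.comp continuous_fst).mul (hev v)

/-- The homeomorphism. -/
noncomputable def homeo : G4 ≃ₜ Metric.sphere (0 : Quaternion ℝ) 1 × K4 where
  toFun := fwd
  invFun := bwd
  left_inv := left_inv'
  right_inv := right_inv'
  continuous_toFun := continuous_fwd
  continuous_invFun := continuous_bwd

end SO4Aux

/-- The equivariant homeomorphism `SO(4) ≅ S³ × SO(3)`:
`h(f) = (f(1), v ↦ f(1)⁻¹ f(v))` is a homeomorphism from `G` onto
`S(ℍ) × K` with inverse `(u, g) ↦ (v ↦ u · g(v))`, and it is equivariant for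
conjugation by the isometry `c : v ↦ i v i⁻¹`:
`h(c ∘ f ∘ c⁻¹) = (c(f(1)), c ∘ g ∘ c⁻¹)` where `g(v) = f(1)⁻¹ f(v)`. -/
theorem so4_homeo_sphere_times_so3_equivariant :
    ∃ e : G4 ≃ₜ Metric.sphere (0 : Quaternion ℝ) 1 × K4,
      (∀ f : G4, ‖f.1 1‖ = 1) ∧
      (∀ f : G4, ((e f).1 : Quaternion ℝ) = f.1 1) ∧
      (∀ (f : G4) (v : Quaternion ℝ), ((e f).2).1.1 v = (f.1 1)⁻¹ * f.1 v) ∧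
      (∀ (u : Metric.sphere (0 : Quaternion ℝ) 1) (k : K4) (v : Quaternion ℝ),
        (e.symm (u, k)).1 v = (u : Quaternion ℝ) * k.1.1 v) ∧
      (∀ c : Quaternion ℝ ≃ₗᵢ[ℝ] Quaternion ℝ,
        (∀ v : Quaternion ℝ, c v = quatI * v * quatI⁻¹) →
        ∀ f fc : G4, (∀ v : Quaternion ℝ, fc.1 v = c (f.1 (c.symm v))) →
          (((e fc).1 : Quaternion ℝ) = c (f.1 1)) ∧
          (∀ v : Quaternion ℝ,
            ((e fc).2).1.1 v = c (((e f).2).1.1 (c.symm v)))) := by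
  refine ⟨SO4Aux.homeo, fun f => SO4Aux.norm_one_of_G4 f, fun f => rfl,
    fun f v => rfl, fun u k v => rfl, ?_⟩
  intro c hc f fc hfc
  have hi : quatI ≠ 0 := SO4Aux.quatI_ne_zero
  have hc1 : c 1 = 1 := by rw [hc, mul_one, mul_inv_cancel₀ hi]
  have hcs1 : c.symm 1 = 1 := by
    have h := c.symm_apply_apply 1
    rw [hc1] at h
    exact h
  constructor
  · show fc.1 1 = c (f.1 1)
    rw [hfc, hcs1]
  · intro v
    show (fc.1 1)⁻¹ * fc.1 v = c ((f.1 1)⁻¹ * f.1 (c.symm v))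
    rw [hfc, hfc, hcs1, hc, hc, hc]
    simp [mul_inv_rev, inv_inv, mul_assoc, inv_mul_cancel_left₀ hi]
end
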